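/- arXiv:2308.00452 — 5 statements merged into one kernel-verified Lean document; each statement's English description precedes it below -/
import Mathlib

section
/- Let B be a finite set, S ⊆ B, f : B → C, and let the predicted label of f be g(f) = the label c maximizing |{b ∈ B : f(b) = c}| with ties broken by a fixed linear order on C (smaller label wins). Suppose g(f) = c₁ and a label c₂ ≠ c₁ satisfies the 'safety' condition |{b ∈ S : f(b) = c₁}| ≥ |{b ∈ S : f(b) = c₂}| + |B \ S| + (1 if c₁ > c₂ else 0). Then for every f' : B → C agreeing with f on S, g(f') ≠ c₂. -/
/-- Number of ablations in `B` labeled `c` by `f`. -/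
def voteCount {β C : Type*} [DecidableEq C] (B : Finset β) (f : β → C) (c : C) : ℕ :=
  (B.filter fun b => f b = c).card

/-- `c` is the label returned by the argmax of vote counts over `B` with ties broken
in favor of the smaller label: it beats every other label, counting a one-vote handicap
against every strictly smaller label. -/
def majWins {β C : Type*} [DecidableEq C] [LinearOrder C]
    (B : Finset β) (f : β → C) (c : C) : Prop :=
  ∀ c' ≠ c, voteCount B f c' + (if c' < c then 1 else 0) ≤ voteCount B f c

lemma voteCount_agree {β C : Type*} [DecidableEq C] (S : Finset β) (f f' : β → C)
    (h : ∀ b ∈ S, f' b = f b) (c : C) : voteCount S f' c = voteCount S f c := by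
  unfold voteCount
  congr 1
  apply Finset.filter_congr
  intro b hb
  rw [h b hb]

lemma voteCount_le_sub {β C : Type*} [DecidableEq β] [DecidableEq C] (B S : Finset β)
    (hS : S ⊆ B) (f : β → C) (c : C) :
    voteCount B f c ≤ voteCount S f c + (B \ S).card := by
  unfold voteCount
  calc (B.filter fun b => f b = c).card
      ≤ ((S.filter fun b => f b = c) ∪ (B \ S)).card := by
        apply Finset.card_le_card
        intro b hb
        simp only [Finset.mem_filter, Finset.mem_union, Finset.mem_sdiff] at *
        by_cases hbS : b ∈ S
        · exact Or.inl ⟨hbS, hb.2⟩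
        · exact Or.inr ⟨hb.1, hbS⟩
    _ ≤ _ := Finset.card_union_le _ _

lemma voteCount_mono {β C : Type*} [DecidableEq C] (B S : Finset β)
    (hS : S ⊆ B) (f : β → C) (c : C) :
    voteCount S f c ≤ voteCount B f c :=
  Finset.card_le_card (Finset.filter_subset_filter _ hS)

/-- Lemma 1 (one direction): if label `c₂ ≠ c₁ = g(f)` satisfies the safety condition
`|{b∈S : f b = c₁}| ≥ |{b∈S : f b = c₂}| + |B \ S| + [c₁ > c₂]`, then no labeling `f'`
that agrees with `f` on `S` can have `c₂` as its argmax label. -/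
theorem not_local_malicious_never_output {β C : Type*} [DecidableEq β] [DecidableEq C]
    [LinearOrder C] (B S : Finset β) (hS : S ⊆ B) (f : β → C) (c₁ c₂ : C)
    (hg : majWins B f c₁) (hne : c₂ ≠ c₁)
    (hsafe : voteCount S f c₂ + (B \ S).card + (if c₂ < c₁ then 1 else 0) ≤
      voteCount S f c₁) :
    ∀ f' : β → C, (∀ b ∈ S, f' b = f b) → ¬ majWins B f' c₂ := by
  intro f' hagree hmaj
  have h1 := hmaj c₁ (Ne.symm hne)
  have h2 : voteCount B f' c₂ ≤ voteCount S f c₂ + (B \ S).card := by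
    calc voteCount B f' c₂ ≤ voteCount S f' c₂ + (B \ S).card :=
          voteCount_le_sub B S hS f' c₂
      _ = voteCount S f c₂ + (B \ S).card := by rw [voteCount_agree S f f' hagree]
  have h3 : voteCount S f c₁ ≤ voteCount B f' c₁ := by
    rw [← voteCount_agree S f f' hagree]
    exact voteCount_mono B S hS f' c₁
  rcases lt_trichotomy c₁ c₂ with h | h | h
  · simp only [if_pos h, if_neg (not_lt_of_gt h)] at h1 hsafe
    omega
  · exact hne h.symm
  · simp only [if_neg (not_lt_of_gt h), if_pos h] at h1 hsafe
    omega
end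

section
/- Let B be a finite set, S ⊆ B, f : B → C, and g as above (argmax of counts with order-based tie-breaking, smaller label wins ties). Define LOCAL(f, S) = { c ≠ g(f) : |{b ∈ S : f(b) = g(f)}| < |{b ∈ S : f(b) = c}| + |B \ S| + (1 if g(f) > c else 0) }. Then for every f' : B → C agreeing with f on S, g(f') ∈ LOCAL(f, S) ∪ {g(f)}. -/
/-- The set of local-malicious labels of `f` (with clean prediction `c₁`) with respect
to the unaffected set `S ⊆ B` (Definition 1 of the paper). -/
def localSet {β C : Type*} [DecidableEq β] [DecidableEq C] [LinearOrder C]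
    (B S : Finset β) (f : β → C) (c₁ : C) : Set C :=
  {c | c ≠ c₁ ∧ voteCount S f c₁ <
    voteCount S f c + (B \ S).card + (if c < c₁ then 1 else 0)}

/-- Lemma 1: any argmax label of a labeling `f'` agreeing with `f` on `S` lies in
`LOCAL(f,S) ∪ {g(f)}`. -/
theorem output_in_local_or_clean {β C : Type*} [DecidableEq β] [DecidableEq C]
    [LinearOrder C] (B S : Finset β) (hS : S ⊆ B) (f : β → C) (c₁ : C)
    (hg : majWins B f c₁) :
    ∀ f' : β → C, (∀ b ∈ S, f' b = f b) →
      ∀ c, majWins B f' c → c ∈ localSet B S f c₁ ∪ {c₁} := by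
  intro f' hagree c hc
  by_cases hcc : c = c₁
  · right; exact hcc
  · left
    refine ⟨hcc, ?_⟩
    have hsplit : ∀ (g : β → C) (d : C),
        voteCount B g d = voteCount S g d + voteCount (B \ S) g d := by
      intro g d
      unfold voteCount
      rw [← Finset.card_union_of_disjoint, ← Finset.filter_union,
        Finset.union_sdiff_of_subset hS]
      exact Finset.disjoint_filter_filter Finset.sdiff_disjoint.symm
    have hSeq : ∀ d, voteCount S f' d = voteCount S f d := by
      intro d
      unfold voteCount
      apply congrArg
      apply Finset.filter_congr
      intro b hb
      rw [hagree b hb]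
    have hmaj := hc c₁ (Ne.symm hcc)
    have h1 : voteCount S f c₁ ≤ voteCount B f' c₁ := by
      rw [hsplit f' c₁, hSeq]; omega
    have h2 : voteCount B f' c ≤ voteCount S f c + (B \ S).card := by
      rw [hsplit f' c, hSeq]
      have := Finset.card_filter_le (B \ S) (fun b => f' b = c)
      unfold voteCount; omega
    rcases lt_or_gt_of_ne hcc with h | h
    · simp only [if_pos h]
      simp only [if_neg (not_lt.mpr h.le)] at hmaj
      omega
    · simp only [if_pos h] at hmaj
      omega
end

section
/- Let B be a finite set, f : B → C, and g(f) = c with the property that |{b : f(b) = c}| ≥ |{b : f(b) = c'}| + 2Δ + (1 if c > c' else 0) for all c' ≠ c, where Δ is a natural number. Then for any f' : B → C differing from f on at most Δ elements, g(f') = c. -/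
lemma voteCount_perturb {β C : Type*} [DecidableEq β] [DecidableEq C]
    (B : Finset β) (f f' : β → C) (c : C) :
    voteCount B f c ≤ voteCount B f' c + (B.filter fun b => f' b ≠ f b).card := by
  unfold voteCount
  calc (B.filter fun b => f b = c).card
      ≤ ((B.filter fun b => f' b = c) ∪ (B.filter fun b => f' b ≠ f b)).card := by
        apply Finset.card_le_card
        intro b hb
        simp only [Finset.mem_filter, Finset.mem_union] at *
        by_cases h : f' b = f b
        · exact Or.inl ⟨hb.1, h.trans hb.2⟩
        · exact Or.inr ⟨hb.1, h⟩
    _ ≤ _ := Finset.card_union_le _ _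

/-- DRS certification: if `c`'s count beats every other label's count by at least
`2Δ` plus the tie-breaking indicator, then any labeling `f'` differing from `f`
on at most `Δ` elements of `B` still has argmax label `c`. -/
theorem drs_certification {β C : Type*} [DecidableEq β] [DecidableEq C] [LinearOrder C]
    (B : Finset β) (f : β → C) (c : C) (Δ : ℕ)
    (hmargin : ∀ c' ≠ c,
      voteCount B f c' + 2 * Δ + (if c' < c then 1 else 0) ≤ voteCount B f c) :
    ∀ f' : β → C, (B.filter fun b => f' b ≠ f b).card ≤ Δ → majWins B f' c := by
  intro f' hΔ c' hc'
  have h1 : voteCount B f c ≤ voteCount B f' c + Δ :=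
    (voteCount_perturb B f f' c).trans (by omega)
  have h2 : voteCount B f' c' ≤ voteCount B f c' + Δ := by
    have := voteCount_perturb B f' f c'
    have hsym : (B.filter fun b => f b ≠ f' b).card = (B.filter fun b => f' b ≠ f b).card := by
      congr 1; apply Finset.filter_congr; intro b _; simp [ne_comm]
    omega
  have := hmargin c' hc'
  omega
end

section
/- In a 2-dimensional cyclic image of size h × w, consider block ablation regions that are s × s squares starting at each position (i, j) with wraparound, and an m × m patch (with m + s - 1 ≤ h and m + s - 1 ≤ w). Then the number of positions (i, j) for which the block ablation intersects the patch is exactly (m + s - 1)². -/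
/-- One-dimensional count: the positions `i < n` for which an `s`-block starting at
`i` (cyclically) intersects an `m`-interval starting at `ℓ` number `m + s - 1`. -/
lemma block_ablation_overlap_count_1d (n s m ℓ : ℕ) (hs : 1 ≤ s) (hm : 1 ≤ m)
    (hb : m + s - 1 ≤ n) :
    ((Finset.range n).filter fun i => ∃ k < s, ∃ t < m, (i + k) % n = (ℓ + t) % n).card
      = m + s - 1 := by
  have hn : 0 < n := lt_of_lt_of_le (by omega) hb
  have hset : ((Finset.range n).filter fun i => ∃ k < s, ∃ t < m, (i + k) % n = (ℓ + t) % n)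
      = (Finset.range (m + s - 1)).image (fun r => (ℓ + (n - (s - 1)) + r) % n) := by
    ext i
    simp only [Finset.mem_filter, Finset.mem_range, Finset.mem_image]
    constructor
    · rintro ⟨hi, k, hk, t, ht, heq⟩
      refine ⟨t + (s - 1 - k), by omega, ?_⟩
      have h1 : ℓ + (n - (s - 1)) + (t + (s - 1 - k)) = (ℓ + t) + (n - k) := by omega
      rw [h1]
      have h2 : ((ℓ + t) + (n - k)) % n = ((i + k) + (n - k)) % n := by
        have := (Nat.ModEq.add_right (n - k) (heq : Nat.ModEq n (i + k) (ℓ + t)))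
        exact this.symm
      rw [h2]
      have h3 : (i + k) + (n - k) = i + n := by omega
      rw [h3, Nat.add_mod_right, Nat.mod_eq_of_lt hi]
    · rintro ⟨r, hr, rfl⟩
      refine ⟨Nat.mod_lt _ hn, s - 1 - r, by omega, r - (s - 1), by omega, ?_⟩
      have h1 : (ℓ + (n - (s - 1)) + r) % n + (s - 1 - r) ≡
          (ℓ + (n - (s - 1)) + r) + (s - 1 - r) [MOD n] :=
        Nat.ModEq.add_right _ (Nat.mod_modEq _ n)
      have h2 : (ℓ + (n - (s - 1)) + r) + (s - 1 - r) = (ℓ + (r - (s - 1))) + n := by omega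
      calc ((ℓ + (n - (s - 1)) + r) % n + (s - 1 - r)) % n
          = ((ℓ + (n - (s - 1)) + r) + (s - 1 - r)) % n := h1
        _ = ((ℓ + (r - (s - 1))) + n) % n := by rw [h2]
        _ = (ℓ + (r - (s - 1))) % n := Nat.add_mod_right _ _
  rw [hset, Finset.card_image_of_injOn, Finset.card_range]
  intro r1 h1 r2 h2 heq
  simp only [Finset.coe_range, Set.mem_Iio] at h1 h2
  have : (ℓ + (n - (s - 1)) + r1) ≡ (ℓ + (n - (s - 1)) + r2) [MOD n] := heq
  have h3 : r1 ≡ r2 [MOD n] := Nat.ModEq.add_left_cancel rfl this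
  have := h3
  unfold Nat.ModEq at this
  rw [Nat.mod_eq_of_lt (by omega), Nat.mod_eq_of_lt (by omega)] at this
  exact this

/-- In a 2-D cyclic image of size `h × w`, with `s × s` block ablation regions
(starting at each position, wrapping around) and an `m × m` patch starting at
`(ℓ₁, ℓ₂)` (with `m + s - 1 ≤ h` and `m + s - 1 ≤ w`), exactly `(m + s - 1)²`
starting positions yield a block intersecting the patch. -/
theorem block_ablation_overlap_count (h w s m ℓ₁ ℓ₂ : ℕ) (hs : 1 ≤ s) (hm : 1 ≤ m)
    (hbh : m + s - 1 ≤ h) (hbw : m + s - 1 ≤ w) :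
    (((Finset.range h) ×ˢ (Finset.range w)).filter fun ij =>
        ∃ k₁ < s, ∃ k₂ < s, ∃ t₁ < m, ∃ t₂ < m,
          (ij.1 + k₁) % h = (ℓ₁ + t₁) % h ∧ (ij.2 + k₂) % w = (ℓ₂ + t₂) % w).card
      = (m + s - 1) ^ 2 := by
  have hprod : (((Finset.range h) ×ˢ (Finset.range w)).filter fun ij =>
        ∃ k₁ < s, ∃ k₂ < s, ∃ t₁ < m, ∃ t₂ < m,
          (ij.1 + k₁) % h = (ℓ₁ + t₁) % h ∧ (ij.2 + k₂) % w = (ℓ₂ + t₂) % w)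
      = ((Finset.range h).filter fun i => ∃ k < s, ∃ t < m, (i + k) % h = (ℓ₁ + t) % h) ×ˢ
        ((Finset.range w).filter fun j => ∃ k < s, ∃ t < m, (j + k) % w = (ℓ₂ + t) % w) := by
    ext ⟨i, j⟩
    simp only [Finset.mem_filter, Finset.mem_product, Finset.mem_range]
    constructor
    · rintro ⟨⟨hi, hj⟩, k₁, hk₁, k₂, hk₂, t₁, ht₁, t₂, ht₂, e₁, e₂⟩
      exact ⟨⟨hi, k₁, hk₁, t₁, ht₁, e₁⟩, ⟨hj, k₂, hk₂, t₂, ht₂, e₂⟩⟩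
    · rintro ⟨⟨hi, k₁, hk₁, t₁, ht₁, e₁⟩, ⟨hj, k₂, hk₂, t₂, ht₂, e₂⟩⟩
      exact ⟨⟨hi, hj⟩, k₁, hk₁, k₂, hk₂, t₁, ht₁, t₂, ht₂, e₁, e₂⟩
  rw [hprod, Finset.card_product,
    block_ablation_overlap_count_1d h s m ℓ₁ hs hm hbh,
    block_ablation_overlap_count_1d w s m ℓ₂ hs hm hbw, sq]
end

section
/- If LOCAL(f, S) = ∅ for a labeling f : B → C with g(f) = c, then for every f' : B → C agreeing with f on S we have g(f') = c. -/
/-- If the set of local-malicious labels is empty, the prediction is robust to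
arbitrary relabeling off `S`: every `f'` agreeing with `f` on `S` has the same
argmax label `c`. -/
theorem empty_local_implies_robust {β C : Type*} [DecidableEq β] [DecidableEq C]
    [LinearOrder C] (B S : Finset β) (hS : S ⊆ B) (f : β → C) (c : C)
    (hg : majWins B f c) (hempty : localSet B S f c = ∅) :
    ∀ f' : β → C, (∀ b ∈ S, f' b = f b) → majWins B f' c := by
  intro f' hagree c' hc'
  have hsame : ∀ x, voteCount S f' x = voteCount S f x := by
    intro x
    unfold voteCount
    congr 1
    apply Finset.filter_congr
    intro b hb
    rw [hagree b hb]
  have hsub : ∀ x, voteCount B f' x ≤ voteCount S f' x + (B \ S).card := by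
    intro x
    unfold voteCount
    calc (B.filter fun b => f' b = x).card
        ≤ ((S.filter fun b => f' b = x) ∪ (B \ S)).card := by
          apply Finset.card_le_card
          intro b hb
          simp only [Finset.mem_filter, Finset.mem_union, Finset.mem_sdiff] at *
          by_cases hbS : b ∈ S
          · exact Or.inl ⟨hbS, hb.2⟩
          · exact Or.inr ⟨hb.1, hbS⟩
      _ ≤ (S.filter fun b => f' b = x).card + (B \ S).card := Finset.card_union_le _ _
  have hSB : voteCount S f c ≤ voteCount B f' c := by
    rw [← hsame c]
    unfold voteCount
    apply Finset.card_le_card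
    intro b hb
    simp only [Finset.mem_filter] at *
    exact ⟨hS hb.1, hb.2⟩
  have hkey : ¬ (voteCount S f c < voteCount S f c' + (B \ S).card + (if c' < c then 1 else 0)) := by
    intro h
    have : c' ∈ localSet B S f c := ⟨hc', h⟩
    rw [hempty] at this
    exact this
  push_neg at hkey
  calc voteCount B f' c' + (if c' < c then 1 else 0)
      ≤ voteCount S f' c' + (B \ S).card + (if c' < c then 1 else 0) := by
        exact Nat.add_le_add_right (hsub c') _
    _ = voteCount S f c' + (B \ S).card + (if c' < c then 1 else 0) := by rw [hsame]
    _ ≤ voteCount S f c := hkey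
    _ ≤ voteCount B f' c := hSB
end
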